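/- Let N ≥ 4 and j ∈ ℕ. For functions of x define the operators (Δ_[0] y)(x) = x y''(x) + (5/2) y'(x), (Δ_[1] y)(x) = (1-x) y''(x) - (N/2) y'(x), (Ḋ_[0] y)(x) = √x · y'(x), (Ḋ_[1] y)(x) = -√(1-x) · y'(x), the base norms ‖y‖_{𝔛_[0]} = (∫₀^{2/3} y(x)² x^{3/2} dx)^{1/2} and ‖y‖_{𝔛_[1]} = (∫_{1/3}^{1} y(x)² (1-x)^{N/2-1} dx)^{1/2}, and the graded norms ‖y‖_{𝔛_[μ]^j} = (Σ_{ℓ≤j} ⟨y⟩_{[μ]ℓ}²)^{1/2} where ⟨y⟩_{[μ]2m} = ‖Δ_[μ]^m y‖_{𝔛_[μ]} and ⟨y⟩_{[μ]2m+1} = ‖Ḋ_[μ] Δ_[μ]^m y‖_{𝔛_[μ]}. Then there exists a constant C > 0 such that for every y ∈ C^∞((0,1)) whose support is contained in [1/3, 2/3], one has ‖y‖_{𝔛_[0]^j} ≤ C ‖y‖_{𝔛_[1]^j}. -/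

import Mathlib

open Real MeasureTheory Set Filter Topology

/-- `Δ_[0] y = x y'' + (5/2) y'`. -/
noncomputable def Delta0 (y : ℝ → ℝ) : ℝ → ℝ := fun x =>
  x * deriv (deriv y) x + (5/2) * deriv y x

/-- `Δ_[1] y = (1-x) y'' - (N/2) y'` (i.e. `z y'' + (N/2) y'` with `z = 1-x`). -/
noncomputable def Delta1 (N : ℝ) (y : ℝ → ℝ) : ℝ → ℝ := fun x =>
  (1-x) * deriv (deriv y) x - (N/2) * deriv y x

/-- `Ḋ_[0] y = √x · y'`. -/
noncomputable def Ddot0 (y : ℝ → ℝ) : ℝ → ℝ := fun x => Real.sqrt x * deriv y x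

/-- `Ḋ_[1] y = -√(1-x) · y'`. -/
noncomputable def Ddot1 (y : ℝ → ℝ) : ℝ → ℝ := fun x => -Real.sqrt (1-x) * deriv y x

/-- Base norm `‖y‖_{𝔛_[0]} = (∫₀^{2/3} y² x^{3/2} dx)^{1/2}`. -/
noncomputable def base0 (y : ℝ → ℝ) : ℝ :=
  Real.sqrt (∫ x in (0:ℝ)..(2/3), y x^2 * x ^ ((3:ℝ)/2))

/-- Base norm `‖y‖_{𝔛_[1]} = (∫_{1/3}^1 y² (1-x)^{N/2-1} dx)^{1/2}`. -/
noncomputable def base1 (N : ℝ) (y : ℝ → ℝ) : ℝ :=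
  Real.sqrt (∫ x in (1/3:ℝ)..1, y x^2 * (1-x) ^ (N/2 - 1))

/-- Seminorm `⟨y⟩_{[0]ℓ}`: `‖Δ_[0]^m y‖` for `ℓ = 2m`, `‖Ḋ_[0] Δ_[0]^m y‖` for `ℓ = 2m+1`. -/
noncomputable def bra0 (ℓ : ℕ) (y : ℝ → ℝ) : ℝ :=
  if Even ℓ then base0 (Delta0^[ℓ/2] y) else base0 (Ddot0 (Delta0^[ℓ/2] y))

/-- Seminorm `⟨y⟩_{[1]ℓ}`: `‖Δ_[1]^m y‖` for `ℓ = 2m`, `‖Ḋ_[1] Δ_[1]^m y‖` for `ℓ = 2m+1`. -/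
noncomputable def bra1 (N : ℝ) (ℓ : ℕ) (y : ℝ → ℝ) : ℝ :=
  if Even ℓ then base1 N ((Delta1 N)^[ℓ/2] y) else base1 N (Ddot1 ((Delta1 N)^[ℓ/2] y))

/-- Graded norm `‖y‖_{𝔛_[0]^j}`. -/
noncomputable def Xgrade0 (j : ℕ) (y : ℝ → ℝ) : ℝ :=
  Real.sqrt (∑ ℓ ∈ Finset.range (j+1), (bra0 ℓ y)^2)

/-- Graded norm `‖y‖_{𝔛_[1]^j}`. -/
noncomputable def Xgrade1 (N : ℝ) (j : ℕ) (y : ℝ → ℝ) : ℝ :=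
  Real.sqrt (∑ ℓ ∈ Finset.range (j+1), (bra1 N ℓ y)^2)

/-! ### Auxiliary lemmas -/

section Aux

lemma cd_deriv {g : ℝ → ℝ} (hg : ContDiff ℝ (⊤:ℕ∞) g) : ContDiff ℝ (⊤:ℕ∞) (deriv g) :=
  (contDiff_infty_iff_deriv.mp hg).2

lemma cd_iterated {g : ℝ → ℝ} (hg : ContDiff ℝ (⊤:ℕ∞) g) (k : ℕ) :
    ContDiff ℝ (⊤:ℕ∞) (iteratedDeriv k g) := by
  rw [iteratedDeriv_eq_iterate]; exact hg.iterate_deriv k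

lemma diff_iterated {g : ℝ → ℝ} (hg : ContDiff ℝ (⊤:ℕ∞) g) (k : ℕ) :
    Differentiable ℝ (iteratedDeriv k g) :=
  (cd_iterated hg k).differentiable (by simp)

lemma cd_delta0 {g : ℝ → ℝ} (hg : ContDiff ℝ (⊤:ℕ∞) g) : ContDiff ℝ (⊤:ℕ∞) (Delta0 g) := by
  have h1 := cd_deriv hg
  have h2 := cd_deriv h1
  exact (contDiff_id.mul h2).add (contDiff_const.mul h1)

lemma cd_delta1 {g : ℝ → ℝ} (N : ℝ) (hg : ContDiff ℝ (⊤:ℕ∞) g) :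
    ContDiff ℝ (⊤:ℕ∞) (Delta1 N g) := by
  have h1 := cd_deriv hg
  have h2 := cd_deriv h1
  exact ((contDiff_const.sub contDiff_id).mul h2).sub (contDiff_const.mul h1)

lemma cd_iter0 {y : ℝ → ℝ} (hy : ContDiff ℝ (⊤:ℕ∞) y) (m : ℕ) :
    ContDiff ℝ (⊤:ℕ∞) (Delta0^[m] y) := by
  induction m with
  | zero => exact hy
  | succ m ih => rw [Function.iterate_succ_apply']; exact cd_delta0 ih

lemma cd_iter1 {y : ℝ → ℝ} (N : ℝ) (hy : ContDiff ℝ (⊤:ℕ∞) y) (m : ℕ) :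
    ContDiff ℝ (⊤:ℕ∞) ((Delta1 N)^[m] y) := by
  induction m with
  | zero => exact hy
  | succ m ih => rw [Function.iterate_succ_apply']; exact cd_delta1 N ih

lemma ts_deriv {g : ℝ → ℝ} : tsupport (deriv g) ⊆ tsupport g :=
  closure_minimal support_deriv_subset isClosed_closure

lemma ts_delta0 {g : ℝ → ℝ} : tsupport (Delta0 g) ⊆ tsupport g := by
  apply closure_minimal _ isClosed_closure
  intro x hx
  by_contra hxs
  have h1 : deriv g x = 0 := by
    by_contra h; exact hxs (ts_deriv (subset_closure h))
  have h2 : deriv (deriv g) x = 0 := by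
    by_contra h; exact hxs (ts_deriv (ts_deriv (subset_closure h)))
  simp [Function.mem_support, Delta0, h1, h2] at hx

lemma ts_delta1 {g : ℝ → ℝ} (N : ℝ) : tsupport (Delta1 N g) ⊆ tsupport g := by
  apply closure_minimal _ isClosed_closure
  intro x hx
  by_contra hxs
  have h1 : deriv g x = 0 := by
    by_contra h; exact hxs (ts_deriv (subset_closure h))
  have h2 : deriv (deriv g) x = 0 := by
    by_contra h; exact hxs (ts_deriv (ts_deriv (subset_closure h)))
  simp [Function.mem_support, Delta1, h1, h2] at hx

lemma ts_iter0 {y : ℝ → ℝ} (m : ℕ) : tsupport (Delta0^[m] y) ⊆ tsupport y := by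
  induction m with
  | zero => exact subset_rfl
  | succ m ih => rw [Function.iterate_succ_apply']; exact ts_delta0.trans ih

lemma ts_iter1 {y : ℝ → ℝ} (N : ℝ) (m : ℕ) : tsupport ((Delta1 N)^[m] y) ⊆ tsupport y := by
  induction m with
  | zero => exact subset_rfl
  | succ m ih => rw [Function.iterate_succ_apply']; exact (ts_delta1 N).trans ih

lemma ts_iteratedDeriv {y : ℝ → ℝ} (k : ℕ) : tsupport (iteratedDeriv k y) ⊆ tsupport y := by
  induction k with
  | zero => rw [iteratedDeriv_zero]
  | succ k ih => rw [iteratedDeriv_succ]; exact ts_deriv.trans ih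

lemma ID0 {g : ℝ → ℝ} (hg : ContDiff ℝ (⊤:ℕ∞) g) (r : ℕ) :
    iteratedDeriv r (Delta0 g) =
      fun x => x * iteratedDeriv (r+2) g x + ((r:ℝ) + 5/2) * iteratedDeriv (r+1) g x := by
  induction r with
  | zero =>
    funext x
    simp only [iteratedDeriv_zero, Delta0]
    rw [show ((0:ℕ)+2) = 1+1 from rfl, iteratedDeriv_succ, iteratedDeriv_one]
    norm_num
  | succ r ih =>
    funext x
    rw [iteratedDeriv_succ, ih]
    have hu := diff_iterated hg (r+2)
    have hv := diff_iterated hg (r+1)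
    rw [deriv_fun_add ((differentiable_fun_id.fun_mul hu) x) ((differentiable_const _ |>.fun_mul hv) x),
      deriv_fun_mul (differentiable_fun_id x) (hu x), deriv_const_mul _ (hv x)]
    rw [← iteratedDeriv_succ, ← iteratedDeriv_succ]
    simp only [deriv_id'']
    push_cast
    ring

lemma ID1 {g : ℝ → ℝ} (N : ℝ) (hg : ContDiff ℝ (⊤:ℕ∞) g) (r : ℕ) :
    iteratedDeriv r (Delta1 N g) =
      fun x => (1-x) * iteratedDeriv (r+2) g x - ((r:ℝ) + N/2) * iteratedDeriv (r+1) g x := by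
  induction r with
  | zero =>
    funext x
    simp only [iteratedDeriv_zero, Delta1]
    rw [show ((0:ℕ)+2) = 1+1 from rfl, iteratedDeriv_succ, iteratedDeriv_one]
    norm_num
  | succ r ih =>
    funext x
    rw [iteratedDeriv_succ, ih]
    have hu := diff_iterated hg (r+2)
    have hv := diff_iterated hg (r+1)
    have hw : Differentiable ℝ (fun x : ℝ => 1 - x) :=
      (differentiable_const (1:ℝ)).sub differentiable_fun_id
    rw [deriv_fun_sub ((hw.fun_mul hu) x) ((differentiable_const _ |>.fun_mul hv) x),
      deriv_fun_mul (hw x) (hu x), deriv_const_mul _ (hv x)]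
    rw [← iteratedDeriv_succ, ← iteratedDeriv_succ]
    have : deriv (fun x : ℝ => 1 - x) x = -1 := by
      rw [deriv_fun_sub (differentiable_const _ x) (differentiable_fun_id x)]; simp
    rw [this]
    push_cast
    ring

lemma P0 (m : ℕ) : ∀ r : ℕ, ∃ C > (0:ℝ), ∀ y : ℝ → ℝ, ContDiff ℝ (⊤:ℕ∞) y →
    ∀ x ∈ Icc (0:ℝ) 1,
    |iteratedDeriv r (Delta0^[m] y) x| ≤
      C * ∑ k ∈ Finset.range (2*m+r+1), |iteratedDeriv k y x| := by
  induction m with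
  | zero =>
    intro r
    refine ⟨1, one_pos, fun y hy x _ => ?_⟩
    rw [one_mul]
    simpa using Finset.single_le_sum (f := fun k => |iteratedDeriv k y x|)
      (fun k _ => abs_nonneg _) (Finset.self_mem_range_succ r)
  | succ m ih =>
    intro r
    obtain ⟨C2, hC2p, hC2⟩ := ih (r+2)
    obtain ⟨C1, hC1p, hC1⟩ := ih (r+1)
    refine ⟨C2 + ((r:ℝ)+5/2) * C1, by positivity, fun y hy x hx => ?_⟩
    have hS : ∀ t₁ t₂ : ℕ, t₁ ≤ t₂ →
        (∑ k ∈ Finset.range t₁, |iteratedDeriv k y x|) ≤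
        ∑ k ∈ Finset.range t₂, |iteratedDeriv k y x| := fun t₁ t₂ h =>
      Finset.sum_le_sum_of_subset_of_nonneg (Finset.range_subset_range.mpr h)
        (fun k _ _ => abs_nonneg _)
    rw [Function.iterate_succ_apply', ID0 (cd_iter0 hy m) r]
    have h2 := hC2 y hy x hx
    have h1 := hC1 y hy x hx
    have e2 : 2*m+(r+2)+1 = 2*(m+1)+r+1 := by ring
    have e1 : 2*m+(r+1)+1 ≤ 2*(m+1)+r+1 := by omega
    calc |x * iteratedDeriv (r + 2) (Delta0^[m] y) x +
            ((r:ℝ) + 5/2) * iteratedDeriv (r + 1) (Delta0^[m] y) x|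
        ≤ |x * iteratedDeriv (r + 2) (Delta0^[m] y) x| +
            |((r:ℝ) + 5/2) * iteratedDeriv (r + 1) (Delta0^[m] y) x| := abs_add_le _ _
      _ = |x| * |iteratedDeriv (r + 2) (Delta0^[m] y) x| +
            ((r:ℝ) + 5/2) * |iteratedDeriv (r + 1) (Delta0^[m] y) x| := by
          rw [abs_mul, abs_mul, abs_of_nonneg (show (0:ℝ) ≤ (r:ℝ)+5/2 by positivity)]
      _ ≤ 1 * |iteratedDeriv (r + 2) (Delta0^[m] y) x| +
            ((r:ℝ) + 5/2) * |iteratedDeriv (r + 1) (Delta0^[m] y) x| := by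
          gcongr
          exact abs_le.mpr ⟨by linarith [hx.1], hx.2⟩
      _ ≤ C2 * (∑ k ∈ Finset.range (2*(m+1)+r+1), |iteratedDeriv k y x|) +
            ((r:ℝ)+5/2) * (C1 * ∑ k ∈ Finset.range (2*(m+1)+r+1), |iteratedDeriv k y x|) := by
          rw [one_mul]
          refine add_le_add (le_trans h2 (le_of_eq (by rw [e2]))) ?_
          refine mul_le_mul_of_nonneg_left (h1.trans ?_) (by positivity)
          exact mul_le_mul_of_nonneg_left (hS _ _ e1) hC1p.le
      _ = (C2 + ((r:ℝ)+5/2) * C1) * ∑ k ∈ Finset.range (2*(m+1)+r+1),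
            |iteratedDeriv k y x| := by ring

/-- The family of functions controlled by the `[1]`-grading: `Δ_[1]^m y` and their
first derivatives. -/
noncomputable def Hfun (N : ℝ) (y : ℝ → ℝ) (ℓ : ℕ) : ℝ → ℝ :=
  if Even ℓ then (Delta1 N)^[ℓ/2] y else deriv ((Delta1 N)^[ℓ/2] y)

lemma Hfun_even (N : ℝ) (y : ℝ → ℝ) (m : ℕ) : Hfun N y (2*m) = (Delta1 N)^[m] y := by
  simp [Hfun, Nat.mul_div_cancel_left m two_pos]

lemma Hfun_odd (N : ℝ) (y : ℝ → ℝ) (m : ℕ) : Hfun N y (2*m+1) = deriv ((Delta1 N)^[m] y) := by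
  have h : ¬ Even (2*m+1) := by simp [Nat.even_add_one, parity_simps]
  have h2 : (2*m+1)/2 = m := by omega
  simp [Hfun, h, h2]

lemma cont_Hfun {N : ℝ} {y : ℝ → ℝ} (hy : ContDiff ℝ (⊤:ℕ∞) y) (ℓ : ℕ) :
    Continuous (Hfun N y ℓ) := by
  unfold Hfun
  split
  · exact (cd_iter1 N hy _).continuous
  · exact (cd_deriv (cd_iter1 N hy _)).continuous

lemma P1 (N : ℝ) (hN : 4 ≤ N) : ∀ r m : ℕ, ∃ C > (0:ℝ), ∀ y : ℝ → ℝ, ContDiff ℝ (⊤:ℕ∞) y →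
    ∀ x ∈ Icc (1/3:ℝ) (2/3),
    |iteratedDeriv r ((Delta1 N)^[m] y) x| ≤
      C * ∑ ℓ ∈ Finset.range (2*m+r+1), |Hfun N y ℓ x| := by
  intro r
  induction r using Nat.strong_induction_on with
  | _ r IH =>
  match r, IH with
  | 0, _ =>
    intro m
    refine ⟨1, one_pos, fun y hy x _ => ?_⟩
    rw [one_mul, iteratedDeriv_zero]
    have : |((Delta1 N)^[m] y) x| = |Hfun N y (2*m) x| := by rw [Hfun_even]
    rw [this]
    exact Finset.single_le_sum (f := fun ℓ => |Hfun N y ℓ x|)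
      (fun ℓ _ => abs_nonneg _) (Finset.mem_range.mpr (by omega))
  | 1, _ =>
    intro m
    refine ⟨1, one_pos, fun y hy x _ => ?_⟩
    rw [one_mul, iteratedDeriv_one]
    have : |deriv ((Delta1 N)^[m] y) x| = |Hfun N y (2*m+1) x| := by rw [Hfun_odd]
    rw [this]
    exact Finset.single_le_sum (f := fun ℓ => |Hfun N y ℓ x|)
      (fun ℓ _ => abs_nonneg _) (Finset.mem_range.mpr (by omega))
  | (s+2), IH =>
    intro m
    obtain ⟨C2, hC2p, hC2⟩ := IH s (by omega) (m+1)
    obtain ⟨C1, hC1p, hC1⟩ := IH (s+1) (by omega) m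
    have hcnn : (0:ℝ) ≤ (s:ℝ) + N/2 := by positivity
    refine ⟨3*C2 + 3*((s:ℝ)+N/2)*C1, by positivity, fun y hy x hx => ?_⟩
    set g := (Delta1 N)^[m] y with hg
    set A := iteratedDeriv s ((Delta1 N)^[m+1] y) x with hA
    set B := iteratedDeriv (s+1) g x with hB
    set D := iteratedDeriv (s+2) g x with hD
    set c : ℝ := (s:ℝ) + N/2 with hc
    have hE : A = (1-x) * D - c * B := by
      rw [hA, Function.iterate_succ_apply', ID1 N (cd_iter1 N hy m) s]
    have hmul : D * (1-x) = A + c * B := by linarith [hE]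
    have habs : |D| * |1-x| = |A + c * B| := by rw [← abs_mul, hmul]
    have hxb : (1/3:ℝ) ≤ 1 - x := by linarith [hx.2]
    have habs1 : |1-x| = 1-x := abs_of_nonneg (by linarith)
    have hDb : |D| ≤ 3 * (|A| + c * |B|) := by
      have h1 : |A + c * B| ≤ |A| + c * |B| := by
        refine (abs_add_le _ _).trans ?_
        rw [abs_mul, abs_of_nonneg hcnn]
      nlinarith [abs_nonneg D, habs, habs1]
    have hAb := hC2 y hy x hx
    have hBb := hC1 y hy x hx
    have e2 : 2*(m+1)+s+1 = 2*m+(s+2)+1 := by ring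
    have hBb' : |B| ≤ C1 * ∑ ℓ ∈ Finset.range (2*m+(s+2)+1), |Hfun N y ℓ x| := by
      refine hBb.trans (mul_le_mul_of_nonneg_left ?_ hC1p.le)
      exact Finset.sum_le_sum_of_subset_of_nonneg
        (Finset.range_subset_range.mpr (by omega)) (fun ℓ _ _ => abs_nonneg _)
    have hAb' : |A| ≤ C2 * ∑ ℓ ∈ Finset.range (2*m+(s+2)+1), |Hfun N y ℓ x| := by
      rw [← e2]; exact hAb
    calc |D| ≤ 3 * (|A| + c * |B|) := hDb
      _ ≤ 3 * (C2 * (∑ ℓ ∈ Finset.range (2*m+(s+2)+1), |Hfun N y ℓ x|)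
            + c * (C1 * ∑ ℓ ∈ Finset.range (2*m+(s+2)+1), |Hfun N y ℓ x|)) := by
          have := mul_le_mul_of_nonneg_left hBb' hcnn
          linarith [hAb']
      _ = (3*C2 + 3*c*C1) * ∑ ℓ ∈ Finset.range (2*m+(s+2)+1), |Hfun N y ℓ x| := by ring

/-! ### Integral comparison lemmas -/

lemma zero_outside {g : ℝ → ℝ} (hc : Continuous g)
    (hs : tsupport g ⊆ Icc (1/3:ℝ) (2/3)) :
    ∀ x : ℝ, x ≤ 1/3 ∨ 2/3 ≤ x → g x = 0 := by
  have h1 : EqOn g 0 ((Icc (1/3:ℝ) (2/3))ᶜ) := fun x hx =>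
    image_eq_zero_of_notMem_tsupport (fun h => hx (hs h))
  have hcl : EqOn g 0 (closure ((Icc (1/3:ℝ) (2/3))ᶜ)) :=
    h1.closure hc continuous_const
  intro x hx
  apply hcl
  rcases hx with hx | hx
  · have : x ∈ closure (Iio (1/3:ℝ)) := by rw [closure_Iio]; exact hx
    refine closure_mono ?_ this
    intro z hz
    simp only [mem_compl_iff, mem_Icc, not_and_or]
    left; exact not_le.mpr hz
  · have : x ∈ closure (Ioi (2/3:ℝ)) := by rw [closure_Ioi]; exact hx
    refine closure_mono ?_ this
    intro z hz
    simp only [mem_compl_iff, mem_Icc, not_and_or]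
    right; exact not_le.mpr hz

/-- Reference (unweighted) square integral over `[0,1]`. -/
noncomputable def Jint (g : ℝ → ℝ) : ℝ := ∫ x in (0:ℝ)..1, g x ^ 2

lemma jint_nonneg (g : ℝ → ℝ) : 0 ≤ Jint g :=
  intervalIntegral.integral_nonneg (by norm_num) (fun x _ => sq_nonneg _)

lemma cont_w0 : Continuous (fun x : ℝ => x ^ ((3:ℝ)/2)) :=
  Real.continuous_rpow_const (by norm_num)

lemma cont_w1 {N : ℝ} (hN : 4 ≤ N) : Continuous (fun x : ℝ => (1-x) ^ (N/2-1)) :=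
  (Real.continuous_rpow_const (by linarith)).comp (continuous_const.sub continuous_id)

lemma base0sq_le {F : ℝ → ℝ} (hF : Continuous F) :
    (∫ x in (0:ℝ)..(2/3), F x ^2 * x ^ ((3:ℝ)/2)) ≤ Jint F := by
  have hInt1 : IntervalIntegrable (fun x => F x ^2 * x ^ ((3:ℝ)/2)) volume 0 (2/3) :=
    ((hF.pow 2).mul cont_w0).intervalIntegrable _ _
  have hInt2 : IntervalIntegrable (fun x => F x ^2) volume 0 (2/3) :=
    (hF.pow 2).intervalIntegrable _ _
  have h1 : (∫ x in (0:ℝ)..(2/3), F x ^2 * x ^ ((3:ℝ)/2)) ≤ ∫ x in (0:ℝ)..(2/3), F x ^2 := by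
    apply intervalIntegral.integral_mono_on (by norm_num) hInt1 hInt2
    intro x hx
    have h0 : (0:ℝ) ≤ x := hx.1
    have hw : x ^ ((3:ℝ)/2) ≤ 1 := Real.rpow_le_one h0 (by linarith [hx.2]) (by norm_num)
    nlinarith [sq_nonneg (F x), Real.rpow_nonneg h0 ((3:ℝ)/2)]
  have h2 : (∫ x in (0:ℝ)..(2/3), F x ^2) ≤ Jint F := by
    rw [Jint, ← intervalIntegral.integral_add_adjacent_intervals
      ((hF.fun_pow 2).intervalIntegrable (0:ℝ) (2/3)) ((hF.fun_pow 2).intervalIntegrable (2/3:ℝ) 1)]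
    have : (0:ℝ) ≤ ∫ x in (2/3:ℝ)..1, F x ^2 :=
      intervalIntegral.integral_nonneg (by norm_num) (fun x _ => sq_nonneg _)
    linarith
  linarith

lemma base0odd_le {F : ℝ → ℝ} (hF : Continuous (deriv F)) :
    (∫ x in (0:ℝ)..(2/3), (Ddot0 F) x ^2 * x ^ ((3:ℝ)/2)) ≤ Jint (deriv F) := by
  have hDcont : Continuous (Ddot0 F) := Real.continuous_sqrt.mul hF
  have h1 : (∫ x in (0:ℝ)..(2/3), (Ddot0 F) x ^2 * x ^ ((3:ℝ)/2))
      ≤ ∫ x in (0:ℝ)..(2/3), deriv F x ^2 := by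
    apply intervalIntegral.integral_mono_on (by norm_num)
      (((hDcont.fun_pow 2).fun_mul cont_w0).intervalIntegrable _ _)
      ((hF.fun_pow 2).intervalIntegrable _ _)
    intro x hx
    have h0 : (0:ℝ) ≤ x := hx.1
    have hsq : (Ddot0 F) x ^2 = x * deriv F x ^2 := by
      unfold Ddot0; rw [mul_pow, Real.sq_sqrt h0]
    have hw : x ^ ((3:ℝ)/2) ≤ 1 := Real.rpow_le_one h0 (by linarith [hx.2]) (by norm_num)
    have hwnn : (0:ℝ) ≤ x ^ ((3:ℝ)/2) := Real.rpow_nonneg h0 _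
    rw [hsq]
    have hx1 : x ≤ 1 := by linarith [hx.2]
    nlinarith [sq_nonneg (deriv F x)]
  have h2 : (∫ x in (0:ℝ)..(2/3), deriv F x ^2) ≤ Jint (deriv F) := by
    rw [Jint, ← intervalIntegral.integral_add_adjacent_intervals
      ((hF.fun_pow 2).intervalIntegrable (0:ℝ) (2/3)) ((hF.fun_pow 2).intervalIntegrable (2/3:ℝ) 1)]
    have : (0:ℝ) ≤ ∫ x in (2/3:ℝ)..1, deriv F x ^2 :=
      intervalIntegral.integral_nonneg (by norm_num) (fun x _ => sq_nonneg _)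
    linarith
  linarith

lemma jint_le_base1sq {N : ℝ} (hN : 4 ≤ N) {F : ℝ → ℝ} (hF : Continuous F)
    (hs : tsupport F ⊆ Icc (1/3:ℝ) (2/3)) :
    (1/3:ℝ) ^ (N/2-1) * Jint F ≤ ∫ x in (1/3:ℝ)..1, F x ^2 * (1-x) ^ (N/2-1) := by
  have hz := zero_outside hF hs
  have hsplit : Jint F = ∫ x in (1/3:ℝ)..1, F x ^2 := by
    rw [Jint, ← intervalIntegral.integral_add_adjacent_intervals
      ((hF.fun_pow 2).intervalIntegrable (0:ℝ) (1/3)) ((hF.fun_pow 2).intervalIntegrable (1/3:ℝ) 1)]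
    have h0 : (∫ x in (0:ℝ)..(1/3), F x ^2) = ∫ x in (0:ℝ)..(1/3), (0:ℝ) := by
      apply intervalIntegral.integral_congr
      intro x hx
      rw [uIcc_of_le (by norm_num)] at hx
      simp [hz x (Or.inl hx.2)]
    rw [h0]; simp
  rw [hsplit, ← intervalIntegral.integral_const_mul]
  apply intervalIntegral.integral_mono_on (by norm_num)
    (((hF.fun_pow 2).intervalIntegrable _ _).const_mul _)
    (((hF.fun_pow 2).fun_mul (cont_w1 hN)).intervalIntegrable _ _)
  intro x hx
  rcases le_or_gt x (2/3) with hx2 | hx2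
  · have h13 : (1/3:ℝ) ≤ 1 - x := by linarith
    have hw : (1/3:ℝ) ^ (N/2-1) ≤ (1-x) ^ (N/2-1) :=
      Real.rpow_le_rpow (by norm_num) h13 (by linarith)
    nlinarith [sq_nonneg (F x)]
  · rw [hz x (Or.inr hx2.le)]
    simp [Real.rpow_nonneg (show (0:ℝ) ≤ 1-x by linarith [hx.2]) (N/2-1)]

lemma jint_deriv_le_base1sq {N : ℝ} (hN : 4 ≤ N) {g : ℝ → ℝ} (hg : Continuous (deriv g))
    (hs : tsupport g ⊆ Icc (1/3:ℝ) (2/3)) :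
    (1/3:ℝ) ^ (N/2-1) * (1/3) * Jint (deriv g) ≤
      ∫ x in (1/3:ℝ)..1, (Ddot1 g) x ^2 * (1-x) ^ (N/2-1) := by
  have hts : tsupport (deriv g) ⊆ Icc (1/3:ℝ) (2/3) :=
    (closure_minimal support_deriv_subset isClosed_closure).trans hs
  have hz := zero_outside hg hts
  have hsplit : Jint (deriv g) = ∫ x in (1/3:ℝ)..1, deriv g x ^2 := by
    rw [Jint, ← intervalIntegral.integral_add_adjacent_intervals
      ((hg.fun_pow 2).intervalIntegrable (0:ℝ) (1/3)) ((hg.fun_pow 2).intervalIntegrable (1/3:ℝ) 1)]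
    have h0 : (∫ x in (0:ℝ)..(1/3), deriv g x ^2) = ∫ x in (0:ℝ)..(1/3), (0:ℝ) := by
      apply intervalIntegral.integral_congr
      intro x hx
      rw [uIcc_of_le (by norm_num)] at hx
      simp [hz x (Or.inl hx.2)]
    rw [h0]; simp
  have hDcont : Continuous (Ddot1 g) := by
    unfold Ddot1
    exact (Real.continuous_sqrt.comp (continuous_const.sub continuous_id)).neg.mul hg
  rw [hsplit, ← intervalIntegral.integral_const_mul]
  apply intervalIntegral.integral_mono_on (by norm_num)
    (((hg.fun_pow 2).intervalIntegrable _ _).const_mul _)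
    (((hDcont.fun_pow 2).fun_mul (cont_w1 hN)).intervalIntegrable _ _)
  intro x hx
  have h1x : (0:ℝ) ≤ 1 - x := by linarith [hx.2]
  have hsq : (Ddot1 g) x ^2 = (1-x) * deriv g x ^2 := by
    unfold Ddot1
    rw [neg_mul, neg_sq, mul_pow, Real.sq_sqrt h1x]
  rcases le_or_gt x (2/3) with hx2 | hx2
  · have h13 : (1/3:ℝ) ≤ 1 - x := by linarith
    have hw : (1/3:ℝ) ^ (N/2-1) ≤ (1-x) ^ (N/2-1) :=
      Real.rpow_le_rpow (by norm_num) h13 (by linarith)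
    rw [hsq]
    have hp : (0:ℝ) ≤ (1/3:ℝ) ^ (N/2-1) := Real.rpow_nonneg (by norm_num) _
    have key : (1/3:ℝ)^(N/2-1) * (1/3) ≤ (1-x)^(N/2-1) * (1-x) :=
      mul_le_mul hw h13 (by norm_num) (Real.rpow_nonneg (by linarith) _)
    nlinarith [mul_le_mul_of_nonneg_right key (sq_nonneg (deriv g x))]
  · rw [hz x (Or.inr hx2.le), hsq, hz x (Or.inr hx2.le)]
    ring_nf
    positivity

lemma jint_mono_of_ptwise {F : ℝ → ℝ} {n : ℕ} {u : ℕ → ℝ → ℝ} (hF : Continuous F)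
    (hu : ∀ k, Continuous (u k)) {C : ℝ}
    (hpt : ∀ x ∈ Icc (0:ℝ) 1, |F x| ≤ C * ∑ k ∈ Finset.range n, |u k x|) :
    Jint F ≤ C^2 * n * ∑ k ∈ Finset.range n, Jint (u k) := by
  have hcont : Continuous (fun x => C^2 * (n:ℝ) * ∑ k ∈ Finset.range n, u k x ^ 2) :=
    continuous_const.mul (continuous_finset_sum _ (fun k _ => (hu k).pow 2))
  have h1 : Jint F ≤ ∫ x in (0:ℝ)..1, C^2 * (n:ℝ) * ∑ k ∈ Finset.range n, u k x ^ 2 := by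
    apply intervalIntegral.integral_mono_on (by norm_num)
      ((hF.pow 2).intervalIntegrable _ _) (hcont.intervalIntegrable _ _)
    intro x hx
    have h2 := hpt x hx
    have h3 : F x ^2 ≤ (C * ∑ k ∈ Finset.range n, |u k x|)^2 := by
      rw [← sq_abs (F x)]
      exact pow_le_pow_left₀ (abs_nonneg _) h2 2
    have h4 : (∑ k ∈ Finset.range n, |u k x|)^2 ≤
        (n:ℝ) * ∑ k ∈ Finset.range n, u k x ^ 2 := by
      have := sq_sum_le_card_mul_sum_sq (s := Finset.range n) (f := fun k => |u k x|)
      simpa [sq_abs] using this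
    calc F x ^2 ≤ (C * ∑ k ∈ Finset.range n, |u k x|)^2 := h3
      _ = C^2 * (∑ k ∈ Finset.range n, |u k x|)^2 := by ring
      _ ≤ C^2 * ((n:ℝ) * ∑ k ∈ Finset.range n, u k x ^ 2) :=
          mul_le_mul_of_nonneg_left h4 (by positivity)
      _ = C^2 * (n:ℝ) * ∑ k ∈ Finset.range n, u k x ^ 2 := by ring
  have h2 : (∫ x in (0:ℝ)..1, C^2 * (n:ℝ) * ∑ k ∈ Finset.range n, u k x ^ 2)
      = C^2 * n * ∑ k ∈ Finset.range n, Jint (u k) := by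
    rw [intervalIntegral.integral_const_mul,
      intervalIntegral.integral_finset_sum (fun k _ => ((hu k).fun_pow 2).intervalIntegrable _ _)]
    rfl
  linarith [h1, h2.le, h2.ge]

/-! ### The two main steps -/

lemma stepA (ℓ : ℕ) : ∃ C > (0:ℝ), ∀ y : ℝ → ℝ, ContDiff ℝ (⊤:ℕ∞) y →
    bra0 ℓ y ^2 ≤ C * ∑ k ∈ Finset.range (ℓ+1), Jint (iteratedDeriv k y) := by
  obtain ⟨m, hm | hm⟩ := Nat.even_or_odd' ℓ <;> subst hm
  · obtain ⟨C, hCp, hC⟩ := P0 m 0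
    refine ⟨C^2 * ((2*m+1 : ℕ) : ℝ) + 1, by positivity, fun y hy => ?_⟩
    have h2 : (2*m)/2 = m := by omega
    have heq : bra0 (2*m) y = base0 (Delta0^[m] y) := by
      rw [bra0, if_pos (even_two_mul m), h2]
    have hFc : Continuous (Delta0^[m] y) := (cd_iter0 hy m).continuous
    have hnn : (0:ℝ) ≤ ∫ x in (0:ℝ)..(2/3), (Delta0^[m] y) x ^2 * x ^ ((3:ℝ)/2) :=
      intervalIntegral.integral_nonneg (by norm_num)
        (fun x hx => mul_nonneg (sq_nonneg _) (Real.rpow_nonneg hx.1 _))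
    have hsq : bra0 (2*m) y ^2 =
        ∫ x in (0:ℝ)..(2/3), (Delta0^[m] y) x ^2 * x ^ ((3:ℝ)/2) := by
      rw [heq, base0, Real.sq_sqrt hnn]
    have hpt : ∀ x ∈ Icc (0:ℝ) 1, |(Delta0^[m] y) x| ≤
        C * ∑ k ∈ Finset.range (2*m+1), |iteratedDeriv k y x| := by
      intro x hx
      have := hC y hy x hx
      rwa [iteratedDeriv_zero] at this
    have hmono := jint_mono_of_ptwise hFc (fun k => (cd_iterated hy k).continuous) hpt
    have hJnn : (0:ℝ) ≤ ∑ k ∈ Finset.range (2*m+1), Jint (iteratedDeriv k y) :=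
      Finset.sum_nonneg (fun k _ => jint_nonneg _)
    calc bra0 (2*m) y ^2 = _ := hsq
      _ ≤ Jint (Delta0^[m] y) := base0sq_le hFc
      _ ≤ C^2 * ((2*m+1 : ℕ) : ℝ) *
            ∑ k ∈ Finset.range (2*m+1), Jint (iteratedDeriv k y) := hmono
      _ ≤ (C^2 * ((2*m+1 : ℕ) : ℝ) + 1) *
            ∑ k ∈ Finset.range (2*m+1), Jint (iteratedDeriv k y) := by
          apply mul_le_mul_of_nonneg_right (by linarith) hJnn
  · obtain ⟨C, hCp, hC⟩ := P0 m 1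
    refine ⟨C^2 * ((2*m+2 : ℕ) : ℝ) + 1, by positivity, fun y hy => ?_⟩
    have h2 : (2*m+1)/2 = m := by omega
    have hodd : ¬ Even (2*m+1) := by simp [Nat.even_add_one, parity_simps]
    have heq : bra0 (2*m+1) y = base0 (Ddot0 (Delta0^[m] y)) := by
      rw [bra0, if_neg hodd, h2]
    have hFc : Continuous (deriv (Delta0^[m] y)) := (cd_deriv (cd_iter0 hy m)).continuous
    have hDc : Continuous (Ddot0 (Delta0^[m] y)) := Real.continuous_sqrt.mul hFc
    have hnn : (0:ℝ) ≤ ∫ x in (0:ℝ)..(2/3), (Ddot0 (Delta0^[m] y)) x ^2 * x ^ ((3:ℝ)/2) :=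
      intervalIntegral.integral_nonneg (by norm_num)
        (fun x hx => mul_nonneg (sq_nonneg _) (Real.rpow_nonneg hx.1 _))
    have hsq : bra0 (2*m+1) y ^2 =
        ∫ x in (0:ℝ)..(2/3), (Ddot0 (Delta0^[m] y)) x ^2 * x ^ ((3:ℝ)/2) := by
      rw [heq, base0, Real.sq_sqrt hnn]
    have hpt : ∀ x ∈ Icc (0:ℝ) 1, |iteratedDeriv 1 (Delta0^[m] y) x| ≤
        C * ∑ k ∈ Finset.range (2*m+2), |iteratedDeriv k y x| := fun x hx => hC y hy x hx
    have hmono := jint_mono_of_ptwise ((cd_iterated (cd_iter0 hy m) 1).continuous)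
      (fun k => (cd_iterated hy k).continuous) hpt
    have hJnn : (0:ℝ) ≤ ∑ k ∈ Finset.range (2*m+2), Jint (iteratedDeriv k y) :=
      Finset.sum_nonneg (fun k _ => jint_nonneg _)
    have hderiveq : Jint (deriv (Delta0^[m] y)) = Jint (iteratedDeriv 1 (Delta0^[m] y)) := by
      rw [iteratedDeriv_one]
    calc bra0 (2*m+1) y ^2 = _ := hsq
      _ ≤ Jint (deriv (Delta0^[m] y)) := base0odd_le hFc
      _ = Jint (iteratedDeriv 1 (Delta0^[m] y)) := hderiveq
      _ ≤ C^2 * ((2*m+2 : ℕ) : ℝ) *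
            ∑ k ∈ Finset.range (2*m+2), Jint (iteratedDeriv k y) := hmono
      _ ≤ (C^2 * ((2*m+2 : ℕ) : ℝ) + 1) *
            ∑ k ∈ Finset.range (2*m+2), Jint (iteratedDeriv k y) := by
          apply mul_le_mul_of_nonneg_right (by linarith) hJnn

lemma stepB (N : ℝ) (hN : 4 ≤ N) (k : ℕ) : ∃ C > (0:ℝ), ∀ y : ℝ → ℝ,
    ContDiff ℝ (⊤:ℕ∞) y → tsupport y ⊆ Icc (1/3) (2/3) →
    Jint (iteratedDeriv k y) ≤ C * ∑ ℓ ∈ Finset.range (k+1), (bra1 N ℓ y)^2 := by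
  obtain ⟨C, hCp, hC⟩ := P1 N hN k 0
  have hc0 : (0:ℝ) < (1/3:ℝ) ^ (N/2-1) := Real.rpow_pos_of_pos (by norm_num) _
  set c : ℝ := (1/3:ℝ) ^ (N/2-1) with hcdef
  refine ⟨C^2 * ((k+1 : ℕ) : ℝ) * (3 / c), by positivity, fun y hy hsupp => ?_⟩
  have hpt : ∀ x ∈ Icc (0:ℝ) 1, |iteratedDeriv k y x| ≤
      C * ∑ ℓ ∈ Finset.range (k+1), |Hfun N y ℓ x| := by
    intro x hx
    have hRnn : (0:ℝ) ≤ C * ∑ ℓ ∈ Finset.range (k+1), |Hfun N y ℓ x| :=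
      mul_nonneg hCp.le (Finset.sum_nonneg (fun ℓ _ => abs_nonneg _))
    rcases le_or_gt x (1/3) with h | h
    · rw [zero_outside (cd_iterated hy k).continuous
        ((ts_iteratedDeriv k).trans hsupp) x (Or.inl h), abs_zero]
      exact hRnn
    rcases le_or_gt x (2/3) with h2 | h2
    · have h0 := hC y hy x ⟨h.le, h2⟩
      have he : 2*0+k+1 = k+1 := by omega
      rw [he] at h0
      simpa only [Function.iterate_zero, id_eq] using h0
    · rw [zero_outside (cd_iterated hy k).continuous
        ((ts_iteratedDeriv k).trans hsupp) x (Or.inr h2.le), abs_zero]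
      exact hRnn
  have hmono := jint_mono_of_ptwise (cd_iterated hy k).continuous (cont_Hfun hy) hpt
  have hper : ∀ ℓ ∈ Finset.range (k+1), Jint (Hfun N y ℓ) ≤ (3 / c) * (bra1 N ℓ y)^2 := by
    intro ℓ _
    obtain ⟨m, hm | hm⟩ := Nat.even_or_odd' ℓ <;> subst hm
    · have h2 : (2*m)/2 = m := by omega
      have heq : bra1 N (2*m) y = base1 N ((Delta1 N)^[m] y) := by
        rw [bra1, if_pos (even_two_mul m), h2]
      have hFc : Continuous ((Delta1 N)^[m] y) := (cd_iter1 N hy m).continuous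
      have hnn : (0:ℝ) ≤ ∫ x in (1/3:ℝ)..1, ((Delta1 N)^[m] y) x ^2 * (1-x) ^ (N/2-1) :=
        intervalIntegral.integral_nonneg (by norm_num)
          (fun x hx => mul_nonneg (sq_nonneg _)
            (Real.rpow_nonneg (by linarith [hx.2]) _))
      have hsq : bra1 N (2*m) y ^2 =
          ∫ x in (1/3:ℝ)..1, ((Delta1 N)^[m] y) x ^2 * (1-x) ^ (N/2-1) := by
        rw [heq, base1, Real.sq_sqrt hnn]
      have hkey := jint_le_base1sq hN hFc ((ts_iter1 N m).trans hsupp)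
      rw [Hfun_even]
      rw [hsq]
      rw [div_mul_eq_mul_div, le_div_iff₀ hc0]
      have hJnn := jint_nonneg ((Delta1 N)^[m] y)
      nlinarith [hkey]
    · have h2 : (2*m+1)/2 = m := by omega
      have hodd : ¬ Even (2*m+1) := by simp [Nat.even_add_one, parity_simps]
      have heq : bra1 N (2*m+1) y = base1 N (Ddot1 ((Delta1 N)^[m] y)) := by
        rw [bra1, if_neg hodd, h2]
      have hgc : Continuous (deriv ((Delta1 N)^[m] y)) :=
        (cd_deriv (cd_iter1 N hy m)).continuous
      have hDc : Continuous (Ddot1 ((Delta1 N)^[m] y)) := by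
        unfold Ddot1
        exact (Real.continuous_sqrt.comp (continuous_const.sub continuous_id)).neg.mul hgc
      have hnn : (0:ℝ) ≤ ∫ x in (1/3:ℝ)..1,
          (Ddot1 ((Delta1 N)^[m] y)) x ^2 * (1-x) ^ (N/2-1) :=
        intervalIntegral.integral_nonneg (by norm_num)
          (fun x hx => mul_nonneg (sq_nonneg _)
            (Real.rpow_nonneg (by linarith [hx.2]) _))
      have hsq : bra1 N (2*m+1) y ^2 =
          ∫ x in (1/3:ℝ)..1, (Ddot1 ((Delta1 N)^[m] y)) x ^2 * (1-x) ^ (N/2-1) := by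
        rw [heq, base1, Real.sq_sqrt hnn]
      have hkey := jint_deriv_le_base1sq hN hgc ((ts_iter1 N m).trans hsupp)
      rw [Hfun_odd]
      rw [hsq]
      rw [div_mul_eq_mul_div, le_div_iff₀ hc0]
      have hJnn := jint_nonneg (deriv ((Delta1 N)^[m] y))
      nlinarith [hkey]
  calc Jint (iteratedDeriv k y)
      ≤ C^2 * ((k+1 : ℕ) : ℝ) * ∑ ℓ ∈ Finset.range (k+1), Jint (Hfun N y ℓ) := hmono
    _ ≤ C^2 * ((k+1 : ℕ) : ℝ) *
          ∑ ℓ ∈ Finset.range (k+1), (3 / c) * (bra1 N ℓ y)^2 := by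
        apply mul_le_mul_of_nonneg_left (Finset.sum_le_sum hper) (by positivity)
    _ = C^2 * ((k+1 : ℕ) : ℝ) * (3 / c) * ∑ ℓ ∈ Finset.range (k+1), (bra1 N ℓ y)^2 := by
        rw [← Finset.mul_sum]; ring

/-- **Proposition 11**: for smooth functions supported in `[1/3, 2/3]`,
`‖y‖_{𝔛_[0]^j} ≤ C ‖y‖_{𝔛_[1]^j}`. -/
theorem weighted_grading_comparison (N : ℝ) (hN : 4 ≤ N) (j : ℕ) :
    ∃ C > 0, ∀ y : ℝ → ℝ, ContDiff ℝ (⊤:ℕ∞) y →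
      tsupport y ⊆ Icc (1/3) (2/3) →
      Xgrade0 j y ≤ C * Xgrade1 N j y := by
  choose CA hCA using stepA
  choose CB hCB using stepB N hN
  set K : ℕ → ℝ := fun ℓ => CA ℓ * ∑ k ∈ Finset.range (ℓ+1), CB k with hK
  have hKpos : ∀ ℓ, 0 < K ℓ := by
    intro ℓ
    exact mul_pos (hCA ℓ).1 (Finset.sum_pos (fun k _ => (hCB k).1) ⟨0, by simp⟩)
  set Ktot : ℝ := ∑ ℓ ∈ Finset.range (j+1), K ℓ with hKtotdef
  have hKtot : 0 < Ktot :=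
    Finset.sum_pos (fun ℓ _ => hKpos ℓ) ⟨0, by simp⟩
  refine ⟨Real.sqrt Ktot, Real.sqrt_pos.mpr hKtot, fun y hy hsupp => ?_⟩
  set T : ℝ := ∑ ℓ' ∈ Finset.range (j+1), (bra1 N ℓ' y)^2 with hTdef
  have hTnn : 0 ≤ T := Finset.sum_nonneg (fun ℓ' _ => sq_nonneg _)
  have hstep : ∀ ℓ ∈ Finset.range (j+1), (bra0 ℓ y)^2 ≤ K ℓ * T := by
    intro ℓ hℓ
    have hrange : ℓ + 1 ≤ j + 1 := by
      simp only [Finset.mem_range] at hℓ; omega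
    have h1 := (hCA ℓ).2 y hy
    have h2 : ∀ k ∈ Finset.range (ℓ+1), Jint (iteratedDeriv k y) ≤ CB k * T := by
      intro k hk
      refine ((hCB k).2 y hy hsupp).trans ?_
      apply mul_le_mul_of_nonneg_left _ (hCB k).1.le
      apply Finset.sum_le_sum_of_subset_of_nonneg
      · apply Finset.range_subset_range.mpr
        simp only [Finset.mem_range] at hk hℓ
        omega
      · exact fun _ _ _ => sq_nonneg _
    calc (bra0 ℓ y)^2 ≤ CA ℓ * ∑ k ∈ Finset.range (ℓ+1), Jint (iteratedDeriv k y) := h1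
      _ ≤ CA ℓ * ∑ k ∈ Finset.range (ℓ+1), CB k * T :=
          mul_le_mul_of_nonneg_left (Finset.sum_le_sum h2) (hCA ℓ).1.le
      _ = K ℓ * T := by rw [hK, ← Finset.sum_mul]; ring
  have hsum : ∑ ℓ ∈ Finset.range (j+1), (bra0 ℓ y)^2 ≤ Ktot * T := by
    calc ∑ ℓ ∈ Finset.range (j+1), (bra0 ℓ y)^2
        ≤ ∑ ℓ ∈ Finset.range (j+1), K ℓ * T := Finset.sum_le_sum hstep
      _ = Ktot * T := by rw [hKtotdef, Finset.sum_mul]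
  calc Xgrade0 j y = Real.sqrt (∑ ℓ ∈ Finset.range (j+1), (bra0 ℓ y)^2) := rfl
    _ ≤ Real.sqrt (Ktot * T) := Real.sqrt_le_sqrt hsum
    _ = Real.sqrt Ktot * Real.sqrt T := Real.sqrt_mul hKtot.le T
    _ = Real.sqrt Ktot * Xgrade1 N j y := rfl
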